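/- For any coprime integers a and b with b ≥ 1, one has log max_{0 ≤ N < b} P_N(a/b) + log min_{0 ≤ N < b} P_N(a/b) = log b. -/

import Mathlib

/-- The Sudler product `P_N(α) = ∏_{n=1}^N |2 sin(π n α)|`. -/
noncomputable def sudler (N : ℕ) (α : ℝ) : ℝ :=
  ∏ n ∈ Finset.Icc 1 N, |2 * Real.sin (Real.pi * n * α)|

open Real Complex Finset in
private lemma sudler_abs_one_sub_exp (θ : ℝ) :
    ‖1 - Complex.exp (θ * Complex.I)‖ = |2 * Real.sin (θ / 2)| := by
  rw [Complex.exp_mul_I]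
  have h1 : (1 : ℂ) - (Complex.cos θ + Complex.sin θ * Complex.I)
      = Complex.ofReal (1 - Real.cos θ) + Complex.ofReal (-Real.sin θ) * Complex.I := by
    push_cast; ring
  rw [h1, Complex.norm_def, Complex.normSq_add_mul_I]
  have h3 : Real.cos (2 * (θ/2)) = 2 * Real.cos (θ/2)^2 - 1 := Real.cos_two_mul _
  have h4 : Real.sin (θ/2)^2 + Real.cos (θ/2)^2 = 1 := Real.sin_sq_add_cos_sq _
  have h5 : Real.sin θ^2 + Real.cos θ^2 = 1 := Real.sin_sq_add_cos_sq _
  have h2 : (1 - Real.cos θ)^2 + (-Real.sin θ)^2 = (2 * Real.sin (θ/2))^2 := by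
    rw [show 2 * (θ/2) = θ by ring] at h3
    nlinarith
  rw [h2, Real.sqrt_sq_eq_abs]

open Real in
private lemma sudler_abs_sin_sub (m : ℤ) (x : ℝ) :
    |Real.sin (m * π - x)| = |Real.sin x| := by
  have hc : |Real.cos (m * π)| = 1 := by
    have h5 := Real.sin_sq_add_cos_sq ((m:ℝ) * π)
    rw [Real.sin_int_mul_pi] at h5
    rw [← Real.sqrt_sq_eq_abs, show Real.cos ((m:ℝ)*π)^2 = 1 by nlinarith]
    exact Real.sqrt_one
  rw [Real.sin_sub, Real.sin_int_mul_pi, zero_mul, zero_sub, abs_neg, abs_mul, hc, one_mul]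

open Real Complex Finset in
/-- `log max_{0 ≤ N < b} P_N(a/b) + log min_{0 ≤ N < b} P_N(a/b) = log b`. -/
theorem sudler_log_max_add_log_min (a b : ℤ) (hb : 1 ≤ b) (hab : IsCoprime a b)
    (hne : (Finset.range b.toNat).Nonempty) :
    Real.log ((Finset.range b.toNat).sup' hne (fun N => sudler N ((a : ℝ) / b))) +
      Real.log ((Finset.range b.toNat).inf' hne (fun N => sudler N ((a : ℝ) / b))) =
      Real.log b := by
  set B := b.toNat with hBdef
  set α : ℝ := (a : ℝ) / b with hα
  set ζ : ℂ := Complex.exp (2 * π * Complex.I * ((a : ℂ) / (b : ℂ))) with hζdef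
  have hBb : (B : ℤ) = b := Int.toNat_of_nonneg (by omega)
  have hB1 : 1 ≤ B := by omega
  have hbR : (B : ℝ) = (b : ℝ) := by exact_mod_cast hBb
  have hbne : (b : ℝ) ≠ 0 := by exact_mod_cast (by omega : b ≠ 0)
  -- ζ is a primitive B-th root of unity
  have hζ : IsPrimitiveRoot ζ B := by
    set c := (a % b).toNat with hc
    have hcb : (c : ℤ) = a % b := Int.toNat_of_nonneg (Int.emod_nonneg a (by omega))
    have hcop : Nat.Coprime c B := by
      have h1 : IsCoprime (a % b) b := by
        have := hab.add_mul_left_left (-(a / b))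
        rwa [show a + b * -(a/b) = a % b by rw [Int.emod_def]; ring] at this
      have h2 : Int.gcd ((c:ℤ)) ((B:ℤ)) = 1 := by
        rw [hcb, hBb]; exact Int.isCoprime_iff_gcd_eq_one.mp h1
      simpa [Int.gcd_natCast_natCast] using h2
    have hprim := Complex.isPrimitiveRoot_exp_of_coprime c B (by omega) hcop
    have hBC : (B:ℂ) = (b:ℂ) := by exact_mod_cast hBb
    have hcC : (c:ℂ) = ((a % b : ℤ):ℂ) := by exact_mod_cast hcb
    have hbC : (b : ℂ) ≠ 0 := by exact_mod_cast (by omega : b ≠ 0)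
    have hBne : (B : ℂ) ≠ 0 := by rw [hBC]; exact hbC
    have key : (a:ℂ)/b = (c:ℂ)/B + ((a/b : ℤ):ℂ) := by
      rw [hBC, hcC]
      have h' : ((a % b : ℤ):ℂ) + (b:ℂ) * ((a/b : ℤ):ℂ) = (a:ℂ) := by
        exact_mod_cast congrArg (Int.cast : ℤ → ℂ) (Int.emod_add_mul_ediv a b)
      field_simp
      linear_combination -h'
    rw [hζdef, show 2*(π:ℂ)*Complex.I*((a:ℂ)/b)
        = 2*(π:ℂ)*Complex.I*((c:ℂ)/B) + ((a/b:ℤ):ℂ)*(2*(π:ℂ)*Complex.I) by rw [key]; ring,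
      Complex.exp_add, Complex.exp_int_mul_two_pi_mul_I, mul_one]
    exact hprim
  -- pointwise identity
  have key : ∀ n : ℕ, |2 * Real.sin (π * n * α)| = ‖1 - ζ ^ n‖ := by
    intro n
    have h1 : ζ ^ n = Complex.exp (((2 * π * n * α : ℝ) : ℂ) * Complex.I) := by
      rw [hζdef, ← Complex.exp_nat_mul]
      congr 1
      rw [hα]
      push_cast
      ring
    rw [h1, sudler_abs_one_sub_exp, show (2 * π * n * α) / 2 = π * n * α by ring]
  -- sudler as complex absolute value
  have hsud : ∀ N : ℕ, sudler N α = ‖∏ n ∈ Finset.Icc 1 N, (1 - ζ ^ n)‖ := by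
    intro N
    rw [sudler, Complex.norm_prod]
    exact Finset.prod_congr rfl fun n _ => key n
  -- value at B - 1
  have hfull : sudler (B - 1) α = (B : ℝ) := by
    rw [hsud]
    have h2 : ∏ n ∈ Finset.Icc 1 (B-1), (1 - ζ ^ n)
        = ∏ k ∈ Finset.range (B-1), (1 - ζ ^ (k+1)) := by
      refine Finset.prod_nbij' (fun n => n - 1) (fun k => k + 1) ?_ ?_ ?_ ?_ ?_
      · intro n hn
        simp only [Finset.mem_Icc] at hn
        simp only [Finset.mem_range]
        omega
      · intro k hk
        simp only [Finset.mem_range] at hk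
        simp only [Finset.mem_Icc]
        omega
      · intro n hn
        simp only [Finset.mem_Icc] at hn
        show n - 1 + 1 = n
        omega
      · intro k hk
        show k + 1 - 1 = k
        omega
      · intro n hn
        simp only [Finset.mem_Icc] at hn
        show (1 : ℂ) - ζ ^ n = 1 - ζ ^ (n - 1 + 1)
        rw [show n - 1 + 1 = n by omega]
    have hprim' : IsPrimitiveRoot ζ ((B-1) + 1) := by
      rwa [Nat.sub_add_cancel hB1]
    rw [h2, hprim'.prod_one_sub_pow_eq_order]
    rw [show ((B-1 : ℕ) : ℂ) + 1 = (B : ℂ) by push_cast [Nat.cast_sub hB1]; ring]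
    simp [Complex.norm_natCast]
  -- positivity
  have hpos : ∀ N : ℕ, N < B → 0 < sudler N α := by
    intro N hN
    rw [hsud]
    rw [Complex.norm_prod]
    apply Finset.prod_pos
    intro n hn
    rw [Finset.mem_Icc] at hn
    have h1 : ζ ^ n ≠ 1 := hζ.pow_ne_one_of_pos_of_lt (by omega) (by omega)
    exact norm_pos_iff.mpr (sub_ne_zero.mpr fun h => h1 h.symm)
  -- reflection
  have hrefl : ∀ N : ℕ, N < B → sudler N α * sudler (B - 1 - N) α = (B : ℝ) := by
    intro N hN
    rw [← hfull]
    rw [sudler, sudler, sudler]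
    rw [show Finset.Icc 1 N = Finset.Ioc 0 N from (Finset.Icc_add_one_left_eq_Ioc 0 N).symm,
        show Finset.Icc 1 (B-1-N) = Finset.Ioc 0 (B-1-N) from (Finset.Icc_add_one_left_eq_Ioc 0 _).symm,
        show Finset.Icc 1 (B-1) = Finset.Ioc 0 (B-1) from (Finset.Icc_add_one_left_eq_Ioc 0 _).symm]
    rw [← Finset.prod_Ioc_consecutive _ (Nat.zero_le N) (by omega : N ≤ B - 1)]
    congr 1
    refine Finset.prod_nbij' (fun m => B - m) (fun n => B - n) ?_ ?_ ?_ ?_ ?_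
    · intro m hm
      simp only [Finset.mem_Ioc] at hm
      show B - m ∈ Finset.Ioc N (B - 1)
      simp only [Finset.mem_Ioc]
      omega
    · intro n hn
      simp only [Finset.mem_Ioc] at hn
      show B - n ∈ Finset.Ioc 0 (B - 1 - N)
      simp only [Finset.mem_Ioc]
      omega
    · intro m hm
      simp only [Finset.mem_Ioc] at hm
      show B - (B - m) = m
      omega
    · intro n hn
      simp only [Finset.mem_Ioc] at hn
      show B - (B - n) = n
      omega
    · intro m hm
      simp only [Finset.mem_Ioc] at hm
      show |2 * Real.sin (π * m * α)| = |2 * Real.sin (π * ((B - m : ℕ):ℝ) * α)|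
      have hcast : ((B - m : ℕ) : ℝ) = (B : ℝ) - (m : ℝ) := by
        push_cast [Nat.cast_sub (by omega : m ≤ B)]; ring
      rw [abs_mul, abs_mul, hcast]
      congr 1
      have harg : π * ((B:ℝ) - m) * α = (a : ℝ) * π - π * m * α := by
        rw [hα, hbR]
        field_simp
      rw [harg]
      have h2 := sudler_abs_sin_sub a (π * m * α)
      push_cast at h2
      rw [h2]
  -- put it together
  obtain ⟨N0, hN0, hM⟩ := Finset.exists_mem_eq_sup' hne (fun N => sudler N α)
  obtain ⟨N1, hN1, hm⟩ := Finset.exists_mem_eq_inf' hne (fun N => sudler N α)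
  rw [Finset.mem_range] at hN0 hN1
  set M := (Finset.range B).sup' hne (fun N => sudler N α) with hMdef
  set m := (Finset.range B).inf' hne (fun N => sudler N α) with hmdef
  have hMpos : 0 < M := hM ▸ hpos N0 hN0
  have hmpos : 0 < m := hm ▸ hpos N1 hN1
  have hmem0 : B - 1 - N0 ∈ Finset.range B := Finset.mem_range.mpr (by omega)
  have hmem1 : B - 1 - N1 ∈ Finset.range B := Finset.mem_range.mpr (by omega)
  have hle : M * m ≤ (B : ℝ) := by
    calc M * m ≤ M * sudler (B - 1 - N0) α := by
          exact mul_le_mul_of_nonneg_left (Finset.inf'_le _ hmem0) hMpos.le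
      _ = sudler N0 α * sudler (B - 1 - N0) α := by rw [hM]
      _ = (B : ℝ) := hrefl N0 hN0
  have hge : (B : ℝ) ≤ M * m := by
    calc (B : ℝ) = sudler (B - 1 - N1) α * sudler N1 α := by
          rw [mul_comm]; exact (hrefl N1 hN1).symm
      _ ≤ M * sudler N1 α := by
          exact mul_le_mul_of_nonneg_right
            (Finset.le_sup' (fun N => sudler N α) hmem1) (hpos N1 hN1).le
      _ = M * m := by rw [hm]
  have hMm : M * m = (B : ℝ) := le_antisymm hle hge
  rw [← Real.log_mul hMpos.ne' hmpos.ne', hMm, hbR]
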